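/- With the data and definitions of the preceding Case-2 statement (l ≥ 1; A, B⁰, B¹; S symmetric, s, s̃; c_i, C_i⁰, C_i¹; D symmetric, E symmetric; d, e, d̃; r^i, R̃^i, R^{ij} with (R^{ij})ᵀ = R^{ji} for i,j = 0,…,l-1; the function J; H = E + (B⁰)ᵀSB⁰ + Σ_i(C_i⁰)ᵀSC_i⁰ + R^{(l-1)(l-1)} + (B⁰)ᵀR̃^{l-1} + (R̃^{l-1})ᵀB⁰ assumed positive definite; and I•, L, M⁰, M^i as defined there), define: s̃' = d̃ + s̃ + Σ_i c_iᵀS c_i - I•ᵀH I•; s' = d + Aᵀs - LᵀH I•; S' = D + AᵀSA - LᵀHL; r'^0 = (B¹)ᵀs + Σ_i (C_i¹)ᵀS c_i - (M⁰)ᵀH I•; r'^i = r^{i-1} - (M^i)ᵀH I• for i = 1,…,l-1; R̃'^0 = AᵀS B¹ - LᵀH M⁰; R̃'^i = AᵀR̃^{i-1} - LᵀH M^i for i = 1,…,l-1; R'^{00} = (B¹)ᵀSB¹ + Σ_i (C_i¹)ᵀS C_i¹ - (M⁰)ᵀH M⁰; R'^{i0} = (R̃^{i-1})ᵀB¹ -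 (M^i)ᵀH M⁰ and R'^{0i} = (R'^{i0})ᵀ for i = 1,…,l-1; R'^{ij} = R^{(i-1)(j-1)} - (M^i)ᵀH M^j for i,j = 1,…,l-1. Then for all x ∈ ℝⁿ and w_0,…,w_{l-1} ∈ ℝ^d, with u* = I• + Lx + Σ_{i=0}^{l-1} M^i w_i, one has J(x, u*, w_0,…,w_{l-1}) = s̃' + 2xᵀs' + xᵀS'x + 2Σ_{i=0}^{l-1} w_iᵀ r'^i + 2xᵀ Σ_{i=0}^{l-1} R̃'^i w_i + Σ_{i,j=0}^{l-1} w_iᵀ R'^{ij} w_j. -/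

import Mathlib

open Matrix

section AuxCase2
variable {K L B : Type*} [Fintype K] [Fintype L]

private lemma aux_dp_sum (v : K → ℝ) (s : Finset B) (f : B → K → ℝ) :
    v ⬝ᵥ (∑ i ∈ s, f i) = ∑ i ∈ s, v ⬝ᵥ f i := by
  simp only [dotProduct, Finset.sum_apply, Finset.mul_sum]
  exact Finset.sum_comm

private lemma aux_sum_dp (v : K → ℝ) (s : Finset B) (f : B → K → ℝ) :
    (∑ i ∈ s, f i) ⬝ᵥ v = ∑ i ∈ s, f i ⬝ᵥ v := by
  simp only [dotProduct, Finset.sum_apply, Finset.sum_mul]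
  exact Finset.sum_comm

private lemma aux_mv_sum (A : Matrix K L ℝ) (s : Finset B) (f : B → L → ℝ) :
    A *ᵥ (∑ i ∈ s, f i) = ∑ i ∈ s, A *ᵥ f i := by
  funext j
  simp only [Matrix.mulVec, Finset.sum_apply]
  exact aux_dp_sum _ _ _

private lemma aux_sum_mv (s : Finset B) (f : B → Matrix K L ℝ) (v : L → ℝ) :
    (∑ i ∈ s, f i) *ᵥ v = ∑ i ∈ s, f i *ᵥ v := by
  classical
  induction s using Finset.induction_on with
  | empty => simp [Matrix.zero_mulVec]
  | insert _ _ hnot ih =>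
    rw [Finset.sum_insert hnot, Finset.sum_insert hnot, Matrix.add_mulVec, ih]

private lemma aux_dp_flip (x : K → ℝ) (A : Matrix K L ℝ) (y : L → ℝ) :
    x ⬝ᵥ (A *ᵥ y) = y ⬝ᵥ (Aᵀ *ᵥ x) := by
  rw [Matrix.dotProduct_mulVec, Matrix.mulVec_transpose, dotProduct_comm]

private lemma aux_mv_dp (A : Matrix K L ℝ) (x : L → ℝ) (y : K → ℝ) :
    (A *ᵥ x) ⬝ᵥ y = x ⬝ᵥ (Aᵀ *ᵥ y) := by
  rw [dotProduct_comm, aux_dp_flip]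

private lemma aux_mk_cast {m : ℕ} (i : Fin m) (h : (i : ℕ) < m + 1) :
    (⟨(i : ℕ), h⟩ : Fin (m + 1)) = i.castSucc := rfl

end AuxCase2

/-- Coefficient update (8)/(20) of Theorem 1 (Case 2 of the inductive
step): substituting the optimal feedback control `u* = I• + Lx + Σ_{i=0}^{l-1} M^i w_i`
into `J` yields the stated quadratic form in `(x, w_0, …, w_{l-1})` with the
recursively-updated coefficients. -/

theorem case2_cost_update {n d p l : ℕ} (hl : 1 ≤ l)
    (A : Matrix (Fin n) (Fin n) ℝ) (B0 B1 : Matrix (Fin n) (Fin d) ℝ)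
    (S : Matrix (Fin n) (Fin n) ℝ) (hS : S.IsSymm)
    (svec : Fin n → ℝ) (stil : ℝ)
    (c : Fin p → Fin n → ℝ) (C0 C1 : Fin p → Matrix (Fin n) (Fin d) ℝ)
    (D : Matrix (Fin n) (Fin n) ℝ) (hD : D.IsSymm)
    (E : Matrix (Fin d) (Fin d) ℝ) (hE : E.IsSymm)
    (dvec : Fin n → ℝ) (evec : Fin d → ℝ) (dtil : ℝ)
    (r : Fin l → Fin d → ℝ) (Rt : Fin l → Matrix (Fin n) (Fin d) ℝ)
    (R : Fin l → Fin l → Matrix (Fin d) (Fin d) ℝ)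
    (hR : ∀ i j : Fin l, (R i j)ᵀ = R j i) :
    let last : Fin l := ⟨l - 1, by omega⟩
    let fz : Fin l := ⟨0, by omega⟩
    -- `v u w i = w_{i+1}` for `i = 0,…,l-2` and `v u w (l-1) = u`
    let v : (Fin d → ℝ) → (Fin l → Fin d → ℝ) → Fin l → Fin d → ℝ := fun u w i =>
      if h : (i : ℕ) + 1 < l then w ⟨(i : ℕ) + 1, h⟩ else u
    let J : (Fin n → ℝ) → (Fin d → ℝ) → (Fin l → Fin d → ℝ) → ℝ := fun x u w =>
      dtil + 2 * (x ⬝ᵥ dvec) + x ⬝ᵥ (D *ᵥ x) + 2 * (u ⬝ᵥ evec) + u ⬝ᵥ (E *ᵥ u)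
        + stil + 2 * ((A *ᵥ x + B0 *ᵥ u + B1 *ᵥ w fz) ⬝ᵥ svec)
        + (A *ᵥ x + B0 *ᵥ u + B1 *ᵥ w fz) ⬝ᵥ (S *ᵥ (A *ᵥ x + B0 *ᵥ u + B1 *ᵥ w fz))
        + ∑ i : Fin p, (c i + C0 i *ᵥ u + C1 i *ᵥ w fz) ⬝ᵥ
            (S *ᵥ (c i + C0 i *ᵥ u + C1 i *ᵥ w fz))
        + 2 * ∑ i : Fin l, v u w i ⬝ᵥ r i
        + 2 * ((A *ᵥ x + B0 *ᵥ u + B1 *ᵥ w fz) ⬝ᵥ ∑ i : Fin l, Rt i *ᵥ v u w i)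
        + ∑ i : Fin l, ∑ j : Fin l, v u w i ⬝ᵥ (R i j *ᵥ v u w j)
    let H := E + B0ᵀ * S * B0 + (∑ i : Fin p, (C0 i)ᵀ * S * C0 i)
      + R last last + B0ᵀ * Rt last + (Rt last)ᵀ * B0
    let Istar : Fin d → ℝ :=
      -(H⁻¹ *ᵥ (evec + B0ᵀ *ᵥ svec + (∑ i : Fin p, (C0 i)ᵀ *ᵥ (S *ᵥ c i)) + r last))
    let L := -(H⁻¹ * (S * B0 + Rt last)ᵀ * A)
    let M0 := -(H⁻¹ * (B0ᵀ * S * B1 + (∑ i : Fin p, (C0 i)ᵀ * S * C1 i)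
      + (Rt last)ᵀ * B1))
    -- `M i = M⁰` for `i = 0` and `M^i = -H⁻¹((B⁰)ᵀR̃^{i-1} + R^{(l-1)(i-1)})` for `i ≥ 1`
    let M : Fin l → Matrix (Fin d) (Fin d) ℝ := fun i =>
      if _h : (i : ℕ) = 0 then M0
      else -(H⁻¹ * (B0ᵀ * Rt ⟨(i : ℕ) - 1, Nat.lt_of_le_of_lt (Nat.sub_le _ _) i.isLt⟩
        + R last ⟨(i : ℕ) - 1, Nat.lt_of_le_of_lt (Nat.sub_le _ _) i.isLt⟩))
    let stil' : ℝ := dtil + stil + (∑ i : Fin p, c i ⬝ᵥ (S *ᵥ c i))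
      - Istar ⬝ᵥ (H *ᵥ Istar)
    let svec' : Fin n → ℝ := dvec + Aᵀ *ᵥ svec - Lᵀ *ᵥ (H *ᵥ Istar)
    let S' := D + Aᵀ * S * A - Lᵀ * H * L
    -- `r' 0 = (B¹)ᵀs + Σ_i (C_i¹)ᵀSc_i - (M⁰)ᵀHI•` and `r'^i = r^{i-1} - (M^i)ᵀHI•` for `i ≥ 1`
    let r' : Fin l → Fin d → ℝ := fun i =>
      if _h : (i : ℕ) = 0 then
        B1ᵀ *ᵥ svec + (∑ k : Fin p, (C1 k)ᵀ *ᵥ (S *ᵥ c k)) - M0ᵀ *ᵥ (H *ᵥ Istar)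
      else r ⟨(i : ℕ) - 1, Nat.lt_of_le_of_lt (Nat.sub_le _ _) i.isLt⟩
        - (M i)ᵀ *ᵥ (H *ᵥ Istar)
    -- `R̃'^0 = AᵀSB¹ - LᵀHM⁰` and `R̃'^i = AᵀR̃^{i-1} - LᵀHM^i` for `i ≥ 1`
    let Rt' : Fin l → Matrix (Fin n) (Fin d) ℝ := fun i =>
      if _h : (i : ℕ) = 0 then Aᵀ * S * B1 - Lᵀ * H * M0
      else Aᵀ * Rt ⟨(i : ℕ) - 1, Nat.lt_of_le_of_lt (Nat.sub_le _ _) i.isLt⟩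
        - Lᵀ * H * M i
    -- `R'^{00}`, `R'^{i0}`, `R'^{0i} = (R'^{i0})ᵀ`, and `R'^{ij}` for `i, j ≥ 1`
    let R' : Fin l → Fin l → Matrix (Fin d) (Fin d) ℝ := fun i j =>
      if _hi : (i : ℕ) = 0 then
        if _hj : (j : ℕ) = 0 then
          B1ᵀ * S * B1 + (∑ k : Fin p, (C1 k)ᵀ * S * C1 k) - M0ᵀ * H * M0
        else ((Rt ⟨(j : ℕ) - 1, Nat.lt_of_le_of_lt (Nat.sub_le _ _) j.isLt⟩)ᵀ * B1
          - (M j)ᵀ * H * M0)ᵀ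
      else
        if _hj : (j : ℕ) = 0 then
          (Rt ⟨(i : ℕ) - 1, Nat.lt_of_le_of_lt (Nat.sub_le _ _) i.isLt⟩)ᵀ * B1
            - (M i)ᵀ * H * M0
        else R ⟨(i : ℕ) - 1, Nat.lt_of_le_of_lt (Nat.sub_le _ _) i.isLt⟩
            ⟨(j : ℕ) - 1, Nat.lt_of_le_of_lt (Nat.sub_le _ _) j.isLt⟩
          - (M i)ᵀ * H * M j
    H.PosDef →
      ∀ (x : Fin n → ℝ) (w : Fin l → Fin d → ℝ),
        J x (Istar + L *ᵥ x + ∑ i : Fin l, M i *ᵥ w i) w =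
          stil' + 2 * (x ⬝ᵥ svec') + x ⬝ᵥ (S' *ᵥ x)
            + 2 * ∑ i : Fin l, w i ⬝ᵥ r' i
            + 2 * (x ⬝ᵥ ∑ i : Fin l, Rt' i *ᵥ w i)
            + ∑ i : Fin l, ∑ j : Fin l, w i ⬝ᵥ (R' i j *ᵥ w j) := by
  obtain ⟨m, rfl⟩ : ∃ m, l = m + 1 := ⟨l - 1, by omega⟩
  intro last fz v J H Istar L M0 M stil' svec' S' r' Rt' R' hH x w
  have hlast : Fin.last m = last := rfl
  have hfz : fz = (0 : Fin (m + 1)) := rfl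
  -- basic facts about H
  have hHs : Hᵀ = H := by
    simp only [H, Matrix.transpose_add, Matrix.transpose_mul, Matrix.transpose_transpose,
      Matrix.transpose_sum, hS.eq, hE.eq, hR, ← Matrix.mul_assoc]
    abel
  have hdet : IsUnit H.det := isUnit_iff_ne_zero.2 (ne_of_gt hH.det_pos)
  have hHinv : H * H⁻¹ = 1 := Matrix.mul_nonsing_inv H hdet
  have hinvH : H⁻¹ * H = 1 := Matrix.nonsing_inv_mul H hdet
  have hHinvs : H⁻¹ᵀ = H⁻¹ := by
    rw [Matrix.transpose_nonsing_inv, hHs]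
  have hcanc1 : ∀ X : Matrix (Fin n) (Fin d) ℝ, X * H⁻¹ * H = X := by
    intro X; rw [Matrix.mul_assoc, hinvH, Matrix.mul_one]
  have hcanc2 : ∀ X : Matrix (Fin d) (Fin d) ℝ, X * H⁻¹ * H = X := by
    intro X; rw [Matrix.mul_assoc, hinvH, Matrix.mul_one]
  have hcanc3 : ∀ X : Matrix (Fin n) (Fin d) ℝ, X * H * H⁻¹ = X := by
    intro X; rw [Matrix.mul_assoc, hHinv, Matrix.mul_one]
  have hcanc4 : ∀ X : Matrix (Fin d) (Fin d) ℝ, X * H * H⁻¹ = X := by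
    intro X; rw [Matrix.mul_assoc, hHinv, Matrix.mul_one]
  -- abbreviations
  set a : Fin d → ℝ :=
    evec + B0ᵀ *ᵥ svec + (∑ i : Fin p, (C0 i)ᵀ *ᵥ (S *ᵥ c i)) + r last with ha
  set K : Matrix (Fin d) (Fin n) ℝ := B0ᵀ * S * A + (Rt last)ᵀ * A with hK
  set N : Fin (m + 1) → Matrix (Fin d) (Fin d) ℝ :=
    Fin.cases (B0ᵀ * S * B1 + (∑ i : Fin p, (C0 i)ᵀ * S * C1 i) + (Rt last)ᵀ * B1)
      (fun i => B0ᵀ * Rt i.castSucc + R last i.castSucc) with hN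
  have hN0 : N 0 = B0ᵀ * S * B1 + (∑ i : Fin p, (C0 i)ᵀ * S * C1 i) + (Rt last)ᵀ * B1 := by
    rw [hN]; exact Fin.cases_zero
  have hNs : ∀ i : Fin m, N i.succ = B0ᵀ * Rt i.castSucc + R last i.castSucc := by
    intro i; rw [hN]; exact Fin.cases_succ i
  have hIstar : Istar = -(H⁻¹ *ᵥ a) := by rw [ha]
  have hM0 : M0 = -(H⁻¹ * N 0) := by rw [hN0]
  have hL : L = -(H⁻¹ * K) := by
    rw [hK]
    simp only [L, Matrix.transpose_add, Matrix.transpose_mul, hS.eq, Matrix.mul_add,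
      Matrix.add_mul, ← Matrix.mul_assoc]
  have hM : ∀ i : Fin (m + 1), M i = -(H⁻¹ * N i) := by
    intro i
    induction i using Fin.cases with
    | zero =>
      simp only [M]
      rw [dif_pos (by simp)]
      exact hM0
    | succ i =>
      simp only [M]
      rw [dif_neg (by simp), hNs]
      simp only [Fin.val_succ, Nat.add_sub_cancel, aux_mk_cast]
  have hLx : ∀ y : Fin n → ℝ, L *ᵥ y = -(H⁻¹ *ᵥ (K *ᵥ y)) := by
    intro y; rw [hL, Matrix.neg_mulVec, Matrix.mulVec_mulVec]
  have hMv : ∀ (i : Fin (m + 1)) (y : Fin d → ℝ), M i *ᵥ y = -(H⁻¹ *ᵥ (N i *ᵥ y)) := by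
    intro i y; rw [hM, Matrix.neg_mulVec, Matrix.mulVec_mulVec]
  set g : Fin d → ℝ := a + K *ᵥ x + ∑ i : Fin (m + 1), N i *ᵥ w i with hg
  have hu : Istar + L *ᵥ x + ∑ i : Fin (m + 1), M i *ᵥ w i = -(H⁻¹ *ᵥ g) := by
    rw [hg, hIstar, hLx]
    simp only [hMv, Matrix.mulVec_add, aux_mv_sum, Finset.sum_neg_distrib]
    abel
  set k : ℝ := dtil + stil
    + 2 * (x ⬝ᵥ dvec) + x ⬝ᵥ (D *ᵥ x)
    + 2 * (x ⬝ᵥ (Aᵀ *ᵥ svec)) + 2 * (w 0 ⬝ᵥ (B1ᵀ *ᵥ svec))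
    + x ⬝ᵥ ((Aᵀ * S * A) *ᵥ x) + 2 * (x ⬝ᵥ ((Aᵀ * S * B1) *ᵥ w 0))
    + w 0 ⬝ᵥ ((B1ᵀ * S * B1) *ᵥ w 0)
    + (∑ i : Fin p, c i ⬝ᵥ (S *ᵥ c i))
    + 2 * (∑ i : Fin p, w 0 ⬝ᵥ (((C1 i)ᵀ * S) *ᵥ c i))
    + (∑ i : Fin p, w 0 ⬝ᵥ (((C1 i)ᵀ * S * C1 i) *ᵥ w 0))
    + 2 * (∑ i : Fin m, w i.succ ⬝ᵥ r i.castSucc)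
    + 2 * (∑ i : Fin m, x ⬝ᵥ ((Aᵀ * Rt i.castSucc) *ᵥ w i.succ))
    + 2 * (∑ i : Fin m, w 0 ⬝ᵥ ((B1ᵀ * Rt i.castSucc) *ᵥ w i.succ))
    + ∑ i : Fin m, ∑ j : Fin m, w i.succ ⬝ᵥ (R i.castSucc j.castSucc *ᵥ w j.succ)
    with hk
  have hg2 : g = a + K *ᵥ x + (N 0 *ᵥ w 0 + ∑ i : Fin m, N i.succ *ᵥ w i.succ) := by
    rw [hg, Fin.sum_univ_succ]
  have hJu : ∀ u : Fin d → ℝ, J x u w = u ⬝ᵥ (H *ᵥ u) + 2 * (u ⬝ᵥ g) + k := by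
    intro u
    have hvc : ∀ i : Fin m, v u w i.castSucc = w i.succ := by
      intro i
      simp only [v]
      rw [dif_pos (by simpa using i.isLt)]
      exact congrArg w (Fin.ext (by simp))
    have hvl : v u w (Fin.last m) = u := by
      simp only [v]
      rw [dif_neg (by simp)]
    have hvl2 : v u w last = u := by
      rw [← hlast]; exact hvl
    -- flips
    have f1 : x ⬝ᵥ ((Aᵀ * S * B0) *ᵥ u) = u ⬝ᵥ ((B0ᵀ * S * A) *ᵥ x) := by
      rw [aux_dp_flip]
      simp [Matrix.transpose_mul, hS.eq, ← Matrix.mul_assoc]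
    have f2 : w 0 ⬝ᵥ ((B1ᵀ * S * B0) *ᵥ u) = u ⬝ᵥ ((B0ᵀ * S * B1) *ᵥ w 0) := by
      rw [aux_dp_flip]
      simp [Matrix.transpose_mul, hS.eq, ← Matrix.mul_assoc]
    have f3 : ∀ i : Fin p, c i ⬝ᵥ ((S * C0 i) *ᵥ u) = u ⬝ᵥ (((C0 i)ᵀ * S) *ᵥ c i) := by
      intro i; rw [aux_dp_flip]
      simp [Matrix.transpose_mul, hS.eq, ← Matrix.mul_assoc]
    have f4 : ∀ i : Fin p,
        w 0 ⬝ᵥ (((C1 i)ᵀ * S * C0 i) *ᵥ u) = u ⬝ᵥ (((C0 i)ᵀ * S * C1 i) *ᵥ w 0) := by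
      intro i; rw [aux_dp_flip]
      simp [Matrix.transpose_mul, hS.eq, ← Matrix.mul_assoc]
    have f5 : ∀ i : Fin p, c i ⬝ᵥ ((S * C1 i) *ᵥ w 0) = w 0 ⬝ᵥ (((C1 i)ᵀ * S) *ᵥ c i) := by
      intro i; rw [aux_dp_flip]
      simp [Matrix.transpose_mul, hS.eq, ← Matrix.mul_assoc]
    have f6 : w 0 ⬝ᵥ ((B1ᵀ * S * A) *ᵥ x) = x ⬝ᵥ ((Aᵀ * S * B1) *ᵥ w 0) := by
      rw [aux_dp_flip]
      simp [Matrix.transpose_mul, hS.eq, ← Matrix.mul_assoc]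
    have f7 : x ⬝ᵥ ((Aᵀ * Rt last) *ᵥ u) = u ⬝ᵥ (((Rt last)ᵀ * A) *ᵥ x) := by
      rw [aux_dp_flip]
      simp [Matrix.transpose_mul, ← Matrix.mul_assoc]
    have f8 : w 0 ⬝ᵥ ((B1ᵀ * Rt last) *ᵥ u) = u ⬝ᵥ (((Rt last)ᵀ * B1) *ᵥ w 0) := by
      rw [aux_dp_flip]
      simp [Matrix.transpose_mul, ← Matrix.mul_assoc]
    have f9 : ∀ i : Fin m,
        w i.succ ⬝ᵥ (R i.castSucc last *ᵥ u) = u ⬝ᵥ (R last i.castSucc *ᵥ w i.succ) := by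
      intro i; rw [aux_dp_flip, hR]
    have f10 : u ⬝ᵥ ((B0ᵀ * Rt last) *ᵥ u) = u ⬝ᵥ (((Rt last)ᵀ * B0) *ᵥ u) := by
      rw [aux_dp_flip]
      simp [Matrix.transpose_mul, ← Matrix.mul_assoc]
    simp only [J, hfz, Fin.sum_univ_castSucc, hvc, hvl, hvl2, hlast, H, hg2, ha, hK, hN0, hNs,
      Matrix.mulVec_add, Matrix.add_mulVec, dotProduct_add, add_dotProduct,
      aux_mv_dp, Matrix.mulVec_mulVec, ← Matrix.mul_assoc, aux_dp_sum, aux_sum_dp,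
      aux_mv_sum, aux_sum_mv, Finset.sum_add_distrib, Matrix.transpose_mul,
      Matrix.transpose_transpose, hS.eq, hk,
      f1, f2, f3, f4, f5, f6, f7, f8, f9, f10]
    ring
  have hkey : (-(H⁻¹ *ᵥ g)) ⬝ᵥ (H *ᵥ (-(H⁻¹ *ᵥ g))) + 2 * ((-(H⁻¹ *ᵥ g)) ⬝ᵥ g)
      = -(g ⬝ᵥ (H⁻¹ *ᵥ g)) := by
    rw [Matrix.mulVec_neg, Matrix.mulVec_mulVec, hHinv, Matrix.one_mulVec]
    rw [neg_dotProduct, dotProduct_neg, neg_dotProduct, neg_neg]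
    rw [aux_mv_dp, hHinvs]
    ring
  rw [hJu, hu, hkey]
  -- component lemmas for the primed coefficients
  have hr'0 : r' 0 = B1ᵀ *ᵥ svec + (∑ k : Fin p, (C1 k)ᵀ *ᵥ (S *ᵥ c k))
      - M0ᵀ *ᵥ (H *ᵥ Istar) := by
    simp only [r']
    rw [dif_pos (by simp)]
  have hr's : ∀ i : Fin m, r' i.succ = r i.castSucc - (M i.succ)ᵀ *ᵥ (H *ᵥ Istar) := by
    intro i
    simp only [r']
    rw [dif_neg (by simp)]
    simp only [Fin.val_succ, Nat.add_sub_cancel, aux_mk_cast]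
  have hRt'0 : Rt' 0 = Aᵀ * S * B1 - Lᵀ * H * M0 := by
    simp only [Rt']
    rw [dif_pos (by simp)]
  have hRt's : ∀ i : Fin m, Rt' i.succ = Aᵀ * Rt i.castSucc - Lᵀ * H * M i.succ := by
    intro i
    simp only [Rt']
    rw [dif_neg (by simp)]
    simp only [Fin.val_succ, Nat.add_sub_cancel, aux_mk_cast]
  have hR'00 : R' 0 0 = B1ᵀ * S * B1 + (∑ k : Fin p, (C1 k)ᵀ * S * C1 k)
      - M0ᵀ * H * M0 := by
    simp only [R']
    rw [dif_pos (by simp), dif_pos (by simp)]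
  have hR'0s : ∀ j : Fin m, R' 0 j.succ
      = ((Rt j.castSucc)ᵀ * B1 - (M j.succ)ᵀ * H * M0)ᵀ := by
    intro j
    simp only [R']
    rw [dif_pos (by simp), dif_neg (by simp)]
    simp only [Fin.val_succ, Nat.add_sub_cancel, aux_mk_cast]
  have hR's0 : ∀ i : Fin m, R' i.succ 0
      = (Rt i.castSucc)ᵀ * B1 - (M i.succ)ᵀ * H * M0 := by
    intro i
    simp only [R']
    rw [dif_neg (by simp), dif_pos (by simp)]
    simp only [Fin.val_succ, Nat.add_sub_cancel, aux_mk_cast]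
  have hR'ss : ∀ i j : Fin m, R' i.succ j.succ
      = R i.castSucc j.castSucc - (M i.succ)ᵀ * H * M j.succ := by
    intro i j
    simp only [R']
    rw [dif_neg (by simp), dif_neg (by simp)]
    simp only [Fin.val_succ, Nat.add_sub_cancel, aux_mk_cast]
  -- flips for the final computation
  have gswap : ∑ i : Fin m, ∑ j : Fin m,
      w j.succ ⬝ᵥ (((N j.succ)ᵀ * H⁻¹ * N i.succ) *ᵥ w i.succ)
      = ∑ i : Fin m, ∑ j : Fin m,
      w i.succ ⬝ᵥ (((N i.succ)ᵀ * H⁻¹ * N j.succ) *ᵥ w j.succ) := Finset.sum_comm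
  have g1 : a ⬝ᵥ ((H⁻¹ * K) *ᵥ x) = x ⬝ᵥ ((Kᵀ * H⁻¹) *ᵥ a) := by
    rw [aux_dp_flip]
    simp [Matrix.transpose_mul, hHinvs, ← Matrix.mul_assoc]
  have g2 : ∀ i : Fin (m + 1),
      a ⬝ᵥ ((H⁻¹ * N i) *ᵥ w i) = w i ⬝ᵥ (((N i)ᵀ * H⁻¹) *ᵥ a) := by
    intro i; rw [aux_dp_flip]
    simp [Matrix.transpose_mul, hHinvs, ← Matrix.mul_assoc]
  have g3 : ∀ i : Fin (m + 1),
      w i ⬝ᵥ (((N i)ᵀ * H⁻¹ * K) *ᵥ x) = x ⬝ᵥ ((Kᵀ * H⁻¹ * N i) *ᵥ w i) := by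
    intro i; rw [aux_dp_flip]
    simp [Matrix.transpose_mul, Matrix.transpose_transpose, hHinvs, ← Matrix.mul_assoc]
  have g4 : ∀ i : Fin m,
      w i.succ ⬝ᵥ (((Rt i.castSucc)ᵀ * B1) *ᵥ w 0)
        = w 0 ⬝ᵥ ((B1ᵀ * Rt i.castSucc) *ᵥ w i.succ) := by
    intro i; rw [aux_dp_flip]
    simp [Matrix.transpose_mul, Matrix.transpose_transpose, ← Matrix.mul_assoc]
  simp only [stil', svec', S', hr'0, hr's, hRt'0, hRt's, hR'00, hR'0s, hR's0, hR'ss,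
    hIstar, hL, hM0, hM, hg, hk, Fin.sum_univ_succ,
    Matrix.transpose_neg, Matrix.transpose_mul, Matrix.transpose_sub, Matrix.transpose_add,
    Matrix.transpose_transpose, hHs, hHinvs,
    Matrix.mulVec_add, Matrix.add_mulVec, Matrix.mulVec_sub, Matrix.sub_mulVec,
    Matrix.mulVec_neg, Matrix.neg_mulVec, dotProduct_add, add_dotProduct,
    dotProduct_sub, sub_dotProduct, dotProduct_neg,
    neg_dotProduct, aux_mv_dp, Matrix.mulVec_mulVec, ← Matrix.mul_assoc,
    Matrix.mul_neg, Matrix.neg_mul, neg_neg,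
    hcanc1, hcanc2, hcanc3, hcanc4, hHinv, hinvH, Matrix.one_mulVec, Matrix.mul_one,
    Matrix.one_mul,
    aux_dp_sum, aux_sum_dp, aux_mv_sum, aux_sum_mv,
    Finset.sum_add_distrib, Finset.sum_sub_distrib, Finset.sum_neg_distrib,
    g1, g2, g3, g4, gswap]
  ring
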